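/- Let R be a commutative ring with involution *. Then R is *-clean (every element is the sum of a unit and a *-invariant idempotent) if and only if R is clean and every idempotent of R satisfies e* = e. -/
import Mathlib


/-- A commutative ring with involution is *-clean (every element is a unit plus a
*-invariant idempotent) iff it is clean and every idempotent is *-invariant. -/
theorem star_clean_iff_clean_and_idempotents_projections
    (R : Type*) [CommRing R] [StarRing R] :
    (∀ a : R, ∃ u e : R, IsUnit u ∧ IsIdempotentElem e ∧ star e = e ∧ a = u + e) ↔
    ((∀ a : R, ∃ u e : R, IsUnit u ∧ IsIdempotentElem e ∧ a = u + e) ∧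
      (∀ e : R, IsIdempotentElem e → star e = e)) := by
  constructor
  · intro h
    refine ⟨fun a => ?_, fun e he => ?_⟩
    · obtain ⟨u, f, hu, hf, _, hae⟩ := h a
      exact ⟨u, f, hu, hf, hae⟩
    · obtain ⟨u, f, hu, hf, hsf, hef⟩ := h e
      have hu' : u = e - f := by rw [hef]; ring
      have key : u * (e + f - 1) = u * 0 := by
        rw [hu', mul_zero]
        have he' : e * e = e := he
        have hf' : f * f = f := hf
        linear_combination he' - hf'
      have h1 : e + f - 1 = 0 := hu.mul_left_cancel key
      have h2 : e = 1 - f := by linear_combination h1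
      rw [h2, star_sub, star_one, hsf]
  · rintro ⟨hclean, hproj⟩ a
    obtain ⟨u, f, hu, hf, hae⟩ := hclean a
    exact ⟨u, f, hu, hf, hproj f hf, hae⟩
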